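/- Reduction to the worst case q = ∞ (general case): let Γ ∈ (0,1], let g : [0,∞) → [0,1] be nondecreasing with 1 − g(0) ≤ Γ, and let ℓ ≥ 0. If ∫_0^ℓ e^{−θ} g(θ) dθ + ∫_0^∞ e^{−θ} ( θ(1 − g(ℓ)) − ∫_{min{θ,ℓ}}^ℓ (1 − g(z)) dz )^+ dθ ≥ Γ, then for every q ≥ 0: ∫_0^ℓ e^{−θ} g(θ) dθ + ∫_0^∞ e^{−θ} ( min{q, θ}(1 − g(ℓ)) − ∫_{min{θ,ℓ}}^ℓ (1 − g(z)) dz )^+ dθ ≥ Γ · (1 − e^{−q}). -/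

import Mathlib

open MeasureTheory Real

private lemma aux_hasDeriv (a x : ℝ) :
    HasDerivAt (fun y => -((y - a + 1) * Real.exp (-y))) (Real.exp (-x) * (x - a)) x := by
  have h2 : HasDerivAt (fun y : ℝ => Real.exp (-y)) (-Real.exp (-x)) x := by
    simpa using (hasDerivAt_neg x).exp
  have h1 : HasDerivAt (fun y : ℝ => y - a + 1) 1 x :=
    ((hasDerivAt_id x).sub_const a).add_const 1
  have h := (h1.mul h2).neg
  rw [show Real.exp (-x) * (x - a) = -(1 * Real.exp (-x) + (x - a + 1) * -Real.exp (-x)) by ring]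
  exact h

private lemma aux_tendsto (a : ℝ) :
    Filter.Tendsto (fun y => -((y - a + 1) * Real.exp (-y))) Filter.atTop (nhds 0) := by
  have h4 := Real.tendsto_pow_mul_exp_neg_atTop_nhds_zero 1
  have h5 := Real.tendsto_exp_neg_atTop_nhds_zero
  have h : Filter.Tendsto (fun y : ℝ => -(y ^ 1 * Real.exp (-y) + (1 - a) * Real.exp (-y)))
      Filter.atTop (nhds 0) := by
    simpa using (h4.add (h5.const_mul (1 - a))).neg
  exact h.congr fun y => by ring

private lemma aux_int (a : ℝ) :
    MeasureTheory.IntegrableOn (fun x => Real.exp (-x) * (x - a)) (Set.Ioi a) :=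
  integrableOn_Ioi_deriv_of_nonneg' (fun x _ => aux_hasDeriv a x)
    (fun x hx => mul_nonneg (Real.exp_pos _).le (by
      have : a < x := hx
      linarith)) (aux_tendsto a)

private lemma aux_val (a : ℝ) :
    ∫ x in Set.Ioi a, Real.exp (-x) * (x - a) = Real.exp (-a) := by
  have h := integral_Ioi_of_hasDerivAt_of_nonneg' (fun x _ => aux_hasDeriv a x)
    (fun x hx => mul_nonneg (Real.exp_pos _).le (by
      have : a < x := hx
      linarith)) (aux_tendsto a)
  rw [h]
  norm_num

/-- Reduction to the worst case `q = ∞` in the general-probability analysis of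
Stochastic Balance. -/
theorem worst_case_q_infty_general
    (Γ : ℝ) (hΓ : Γ ∈ Set.Ioc (0 : ℝ) 1)
    (g : ℝ → ℝ) (hg : MonotoneOn g (Set.Ici 0))
    (hrange : ∀ x ∈ Set.Ici (0 : ℝ), g x ∈ Set.Icc (0 : ℝ) 1)
    (hg0 : 1 - g 0 ≤ Γ) (ℓ : ℝ) (hℓ : 0 ≤ ℓ)
    (hq_infty : (∫ θ in (0 : ℝ)..ℓ, Real.exp (-θ) * g θ)
        + (∫ θ in Set.Ioi (0 : ℝ), Real.exp (-θ) *
            max (θ * (1 - g ℓ) - ∫ z in min θ ℓ..ℓ, (1 - g z)) 0) ≥ Γ) :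
    ∀ q ≥ (0 : ℝ),
      (∫ θ in (0 : ℝ)..ℓ, Real.exp (-θ) * g θ)
        + (∫ θ in Set.Ioi (0 : ℝ), Real.exp (-θ) *
            max (min q θ * (1 - g ℓ) - ∫ z in min θ ℓ..ℓ, (1 - g z)) 0)
      ≥ Γ * (1 - Real.exp (-q)) := by
  intro q hq
  obtain ⟨hΓ0, hΓ1⟩ := hΓ
  have hgl : g 0 ≤ g ℓ := hg (Set.mem_Ici.2 le_rfl) (Set.mem_Ici.2 hℓ) hℓ
  have hgl0 : 0 ≤ g ℓ := (hrange ℓ hℓ).1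
  have hgl1 : g ℓ ≤ 1 := (hrange ℓ hℓ).2
  have hcΓ : 1 - g ℓ ≤ Γ := by linarith
  have hc0 : 0 ≤ 1 - g ℓ := by linarith
  -- interval integrability of 1 - g on subintervals of [0, ∞)
  have hgiv : ∀ a b : ℝ, 0 ≤ a → 0 ≤ b →
      IntervalIntegrable (fun z => 1 - g z) volume a b := by
    intro a b ha hb
    have hsub : Set.uIcc a b ⊆ Set.Ici 0 := fun x hx => le_trans (le_min ha hb) hx.1
    exact intervalIntegrable_const.sub (hg.mono hsub).intervalIntegrable
  -- nonnegativity of the inner integral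
  have hH0 : ∀ θ : ℝ, 0 ≤ θ → 0 ≤ ∫ z in min θ ℓ..ℓ, (1 - g z) := by
    intro θ hθ
    apply intervalIntegral.integral_nonneg (min_le_right θ ℓ)
    intro u hu
    have hu0 : 0 ≤ u := le_trans (le_min hθ hℓ) hu.1
    have := (hrange u hu0).2
    linarith
  -- the inner integral is antitone on [0, ∞)
  have hHanti : AntitoneOn (fun θ => ∫ z in min θ ℓ..ℓ, (1 - g z)) (Set.Ioi (0 : ℝ)) := by
    intro θ₁ h₁ θ₂ h₂ h12
    have h₁ : (0:ℝ) < θ₁ := h₁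
    have h₂ : (0:ℝ) < θ₂ := h₂
    have hm1 : 0 ≤ min θ₁ ℓ := le_min h₁.le hℓ
    have hm2 : 0 ≤ min θ₂ ℓ := le_min h₂.le hℓ
    have hmle : min θ₁ ℓ ≤ min θ₂ ℓ := min_le_min h12 le_rfl
    have hadd := intervalIntegral.integral_add_adjacent_intervals
      (hgiv (min θ₁ ℓ) (min θ₂ ℓ) hm1 hm2) (hgiv (min θ₂ ℓ) ℓ hm2 hℓ)
    have hpos : 0 ≤ ∫ z in min θ₁ ℓ..min θ₂ ℓ, (1 - g z) := by
      apply intervalIntegral.integral_nonneg hmle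
      intro u hu
      have hu0 : 0 ≤ u := le_trans hm1 hu.1
      have := (hrange u hu0).2
      linarith
    simp only
    linarith [hadd]
  have hHm : AEMeasurable (fun θ => ∫ z in min θ ℓ..ℓ, (1 - g z))
      (volume.restrict (Set.Ioi (0:ℝ))) :=
    aemeasurable_restrict_of_antitoneOn measurableSet_Ioi hHanti
  -- integrability of the three integrands on Ioi 0
  have hdom : MeasureTheory.IntegrableOn (fun x => Real.exp (-x) * (x - 0))
      (Set.Ioi (0:ℝ)) := aux_int 0
  have hmeas_exp : AEMeasurable (fun θ : ℝ => Real.exp (-θ))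
      (volume.restrict (Set.Ioi (0:ℝ))) :=
    (Real.measurable_exp.comp measurable_neg).aemeasurable
  have hint1 : MeasureTheory.IntegrableOn
      (fun θ => Real.exp (-θ) * max (θ * (1 - g ℓ) - ∫ z in min θ ℓ..ℓ, (1 - g z)) 0)
      (Set.Ioi (0:ℝ)) := by
    apply MeasureTheory.Integrable.mono' hdom
    · exact (hmeas_exp.mul
        ((((measurable_id.mul_const (1 - g ℓ)).aemeasurable).sub hHm).max
          aemeasurable_const)).aestronglyMeasurable
    · rw [ae_restrict_iff' measurableSet_Ioi]
      filter_upwards with θ hθ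
      have hθ0 : (0:ℝ) < θ := hθ
      have hHθ := hH0 θ hθ0.le
      have h1 : max (θ * (1 - g ℓ) - ∫ z in min θ ℓ..ℓ, (1 - g z)) 0 ≤ θ - 0 := by
        apply max_le _ (by linarith)
        nlinarith
      have h2 : 0 ≤ Real.exp (-θ) * max (θ * (1 - g ℓ) - ∫ z in min θ ℓ..ℓ, (1 - g z)) 0 :=
        mul_nonneg (Real.exp_pos _).le (le_max_right _ _)
      rw [Real.norm_eq_abs, abs_of_nonneg h2]
      exact mul_le_mul_of_nonneg_left h1 (Real.exp_pos _).le
  have hint2 : MeasureTheory.IntegrableOn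
      (fun θ => Real.exp (-θ) * max (min q θ * (1 - g ℓ) - ∫ z in min θ ℓ..ℓ, (1 - g z)) 0)
      (Set.Ioi (0:ℝ)) := by
    apply MeasureTheory.Integrable.mono' hdom
    · exact (hmeas_exp.mul
        (((((measurable_const.min measurable_id).mul_const (1 - g ℓ)).aemeasurable).sub hHm).max
          aemeasurable_const)).aestronglyMeasurable
    · rw [ae_restrict_iff' measurableSet_Ioi]
      filter_upwards with θ hθ
      have hθ0 : (0:ℝ) < θ := hθ
      have hHθ := hH0 θ hθ0.le
      have hminθ : min q θ ≤ θ := min_le_right q θ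
      have hmin0 : 0 ≤ min q θ := le_min hq hθ0.le
      have h1 : max (min q θ * (1 - g ℓ) - ∫ z in min θ ℓ..ℓ, (1 - g z)) 0 ≤ θ - 0 := by
        apply max_le _ (by linarith)
        nlinarith
      have h2 : 0 ≤ Real.exp (-θ) * max (min q θ * (1 - g ℓ) - ∫ z in min θ ℓ..ℓ, (1 - g z)) 0 :=
        mul_nonneg (Real.exp_pos _).le (le_max_right _ _)
      rw [Real.norm_eq_abs, abs_of_nonneg h2]
      exact mul_le_mul_of_nonneg_left h1 (Real.exp_pos _).le
  -- third function: exp (-θ) * (θ - q)⁺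
  set f3 : ℝ → ℝ := fun θ => Real.exp (-θ) * max (θ - q) 0 with hf3def
  have hf3nonneg : ∀ θ, 0 ≤ f3 θ := fun θ =>
    mul_nonneg (Real.exp_pos _).le (le_max_right _ _)
  have hf3supp : Function.support f3 ⊆ Set.Ioi q := by
    intro θ hθ
    by_contra hc
    have : θ ≤ q := not_lt.1 hc
    have : f3 θ = 0 := by
      simp only [hf3def]
      rw [max_eq_right (by linarith)]
      ring
    exact hθ this
  have hf3eq : Set.EqOn f3 (fun x => Real.exp (-x) * (x - q)) (Set.Ioi q) := by
    intro θ hθ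
    have : q < θ := hθ
    simp only [hf3def]
    rw [max_eq_left (by linarith)]
  have hf3intq : MeasureTheory.IntegrableOn f3 (Set.Ioi q) :=
    (aux_int q).congr_fun (fun θ hθ => (hf3eq hθ).symm) measurableSet_Ioi
  have hf3ind : (Set.Ioi q).indicator f3 = f3 := Set.indicator_eq_self.2 hf3supp
  have hf3full : MeasureTheory.Integrable f3 := by
    rw [← hf3ind]
    exact hf3intq.integrable_indicator measurableSet_Ioi
  have hf3val : ∫ θ in Set.Ioi (0:ℝ), f3 θ ≤ Real.exp (-q) := by
    have hle : ∫ θ in Set.Ioi (0:ℝ), f3 θ ≤ ∫ θ, f3 θ :=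
      setIntegral_le_integral hf3full (Filter.Eventually.of_forall hf3nonneg)
    have heq : ∫ θ, f3 θ = ∫ θ in Set.Ioi q, f3 θ := by
      rw [← hf3ind, MeasureTheory.integral_indicator measurableSet_Ioi, hf3ind]
    have heq2 : ∫ θ in Set.Ioi q, f3 θ = Real.exp (-q) := by
      rw [setIntegral_congr_fun measurableSet_Ioi hf3eq]
      exact aux_val q
    linarith
  have hint3 : MeasureTheory.IntegrableOn f3 (Set.Ioi (0:ℝ)) := hf3full.integrableOn
  -- pointwise inequality
  have hpt : ∀ θ ∈ Set.Ioi (0:ℝ),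
      Real.exp (-θ) * max (θ * (1 - g ℓ) - ∫ z in min θ ℓ..ℓ, (1 - g z)) 0
      ≤ Real.exp (-θ) * max (min q θ * (1 - g ℓ) - ∫ z in min θ ℓ..ℓ, (1 - g z)) 0
        + Γ * f3 θ := by
    intro θ hθ
    have hθ0 : (0:ℝ) < θ := hθ
    set X : ℝ := min q θ * (1 - g ℓ) - ∫ z in min θ ℓ..ℓ, (1 - g z) with hX
    have hdiff : θ - min q θ = max (θ - q) 0 := by
      rcases le_total q θ with h | h
      · rw [min_eq_left h, max_eq_left (by linarith)]
      · rw [min_eq_right h, max_eq_right (by linarith)]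
        ring
    have hkey : θ * (1 - g ℓ) - (∫ z in min θ ℓ..ℓ, (1 - g z))
        = X + (θ - min q θ) * (1 - g ℓ) := by rw [hX]; ring
    have hB0 : 0 ≤ (θ - min q θ) * (1 - g ℓ) :=
      mul_nonneg (by rw [hdiff]; exact le_max_right _ _) hc0
    have hmax : max (θ * (1 - g ℓ) - ∫ z in min θ ℓ..ℓ, (1 - g z)) 0
        ≤ max X 0 + max (θ - q) 0 * Γ := by
      rw [hkey]
      apply max_le
      · have h1 : X ≤ max X 0 := le_max_left _ _
        have h2 : (θ - min q θ) * (1 - g ℓ) ≤ max (θ - q) 0 * Γ := by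
          rw [← hdiff]
          apply mul_le_mul_of_nonneg_left hcΓ
          rw [hdiff]; exact le_max_right _ _
        linarith
      · have h2 : 0 ≤ max (θ - q) 0 * Γ :=
          mul_nonneg (le_max_right _ _) hΓ0.le
        have h1 : (0:ℝ) ≤ max X 0 := le_max_right _ _
        linarith
    calc Real.exp (-θ) * max (θ * (1 - g ℓ) - ∫ z in min θ ℓ..ℓ, (1 - g z)) 0
        ≤ Real.exp (-θ) * (max X 0 + max (θ - q) 0 * Γ) :=
          mul_le_mul_of_nonneg_left hmax (Real.exp_pos _).le
      _ = Real.exp (-θ) * max X 0 + Γ * f3 θ := by simp only [hf3def]; ring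
  -- integrate the pointwise inequality
  have hmono : (∫ θ in Set.Ioi (0:ℝ),
        Real.exp (-θ) * max (θ * (1 - g ℓ) - ∫ z in min θ ℓ..ℓ, (1 - g z)) 0)
      ≤ ∫ θ in Set.Ioi (0:ℝ),
        (Real.exp (-θ) * max (min q θ * (1 - g ℓ) - ∫ z in min θ ℓ..ℓ, (1 - g z)) 0
          + Γ * f3 θ) :=
    setIntegral_mono_on hint1 (hint2.add (hint3.const_mul Γ)) measurableSet_Ioi hpt
  have hsplit : (∫ θ in Set.Ioi (0:ℝ),
        (Real.exp (-θ) * max (min q θ * (1 - g ℓ) - ∫ z in min θ ℓ..ℓ, (1 - g z)) 0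
          + Γ * f3 θ))
      = (∫ θ in Set.Ioi (0:ℝ),
          Real.exp (-θ) * max (min q θ * (1 - g ℓ) - ∫ z in min θ ℓ..ℓ, (1 - g z)) 0)
        + Γ * ∫ θ in Set.Ioi (0:ℝ), f3 θ := by
    rw [MeasureTheory.integral_add hint2 (hint3.const_mul Γ),
      MeasureTheory.integral_const_mul]
  have hΓf3 : Γ * (∫ θ in Set.Ioi (0:ℝ), f3 θ) ≤ Γ * Real.exp (-q) :=
    mul_le_mul_of_nonneg_left hf3val hΓ0.le
  have hring : Γ * (1 - Real.exp (-q)) = Γ - Γ * Real.exp (-q) := by ring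
  linarith [hq_infty, hmono, hsplit, hΓf3]
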